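/- arXiv:2412.00914 — 2 statements merged into one kernel-verified Lean document; each statement's English description precedes it below -/
import Mathlib

section
/- For a perfectoid ring R₀, the inverse limit of the truncated Witt vector rings W_r(R₀) along the Witt vector Frobenius maps F : W_{r+1}(R₀) → W_r(R₀) is isomorphic to A_inf(R₀) := W(R₀^♭), the Witt vectors of the tilt of R₀. -/
/-- The inverse limit of the truncated Witt vector rings `W_r(R)` along a family of
transition maps `F r : W_{r+1}(R) → W_r(R)`, realized as a subring of the product. -/
noncomputable def wittFrobeniusLimit (p : ℕ) [Fact p.Prime] (R : Type*) [CommRing R]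
    (F : ∀ r : ℕ, TruncatedWittVector p (r + 1) R →+* TruncatedWittVector p r R) :
    Subring (∀ r : ℕ, TruncatedWittVector p r R) where
  carrier := {f | ∀ r, F r (f (r + 1)) = f r}
  mul_mem' := fun ha hb r => by simp [map_mul, ha r, hb r]
  one_mem' := fun r => by simp
  add_mem' := fun ha hb r => by rw [Pi.add_apply, Pi.add_apply, map_add, ha r, hb r]
  zero_mem' := fun r => by simp
  neg_mem' := fun ha r => by rw [Pi.neg_apply, Pi.neg_apply, map_neg, ha r]

open WittVector TruncatedWittVector Function

namespace WittLimitAux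

variable {p : ℕ} [hp : Fact p.Prime]


section descend

variable {R : Type*} [CommRing R] {T : Type*} [CommRing T]

/-- Descend a ring hom from `𝕎 R` along `truncate n`. -/
noncomputable def wdescend (n : ℕ) (g : WittVector p R →+* T)
    (hg : RingHom.ker (WittVector.truncate (p := p) (R := R) n) ≤ RingHom.ker g) :
    TruncatedWittVector p n R →+* T :=
  RingHom.liftOfRightInverse (WittVector.truncate n) TruncatedWittVector.out
    TruncatedWittVector.truncateFun_out ⟨g, hg⟩

@[simp] lemma wdescend_truncate (n : ℕ) (g : WittVector p R →+* T) (hg) (x : WittVector p R) :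
    wdescend n g hg (WittVector.truncate n x) = g x :=
  RingHom.liftOfRightInverse_comp_apply _ _ _ _ _

lemma truncate_out' (n : ℕ) (x : TruncatedWittVector p n R) :
    WittVector.truncate n x.out = x := by
  ext i
  rw [WittVector.coeff_truncate, TruncatedWittVector.coeff_out]

end descend

section polyest

variable {R : Type*} [CommRing R]

lemma aeval_sub_constant_mem (I : Ideal R) (g : ℕ → R) (hg : ∀ n, g n ∈ I)
    (P : MvPolynomial ℕ ℤ) :
    MvPolynomial.aeval g P - algebraMap ℤ R (MvPolynomial.constantCoeff P) ∈ I := by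
  induction P using MvPolynomial.induction_on with
  | C a => simp
  | add f g hf hg =>
      have := I.add_mem hf hg
      simpa [sub_add_sub_comm] using this
  | mul_X f i hf =>
      simp only [map_mul, MvPolynomial.aeval_X, MvPolynomial.constantCoeff_X, mul_zero, map_zero,
        sub_zero]
      exact I.mul_mem_left _ (hg i)

lemma constantCoeff_frobeniusPolyAux (n : ℕ) :
    MvPolynomial.constantCoeff (WittVector.frobeniusPolyAux p n) = 0 := by
  have h := WittVector.coeff_frobenius (0 : WittVector p ℤ) n
  rw [map_zero, WittVector.zero_coeff] at h
  have hc : ∀ m, (0 : WittVector p ℤ).coeff m ∈ (⊥ : Ideal ℤ) := by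
    intro m; simp [WittVector.zero_coeff]
  have h1 := aeval_sub_constant_mem (⊥ : Ideal ℤ) _ hc (WittVector.frobeniusPolyAux p n)
  have h2 := aeval_sub_constant_mem (⊥ : Ideal ℤ) _ hc (WittVector.frobeniusPoly p n)
  rw [Ideal.mem_bot, sub_eq_zero] at h1 h2
  rw [h2] at h
  rw [WittVector.frobeniusPoly] at h
  simp only [map_add, map_pow, map_mul, MvPolynomial.constantCoeff_X, MvPolynomial.constantCoeff_C,
    map_natCast, eq_intCast, Int.cast_natCast, Int.cast_zero, Nat.cast_zero,
    zero_pow hp.out.ne_zero, zero_add] at h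
  have hp0 : (p : ℤ) ≠ 0 := by exact_mod_cast hp.out.ne_zero
  exact (mul_eq_zero.mp h.symm).resolve_left hp0

lemma frobenius_coeff_mem (I K : Ideal R)
    (hpow : ∀ a ∈ I, a ^ p ∈ K) (hmul : ∀ a ∈ I, (p : R) * a ∈ K)
    (w : WittVector p R) (hw : ∀ n, w.coeff n ∈ I) (n : ℕ) :
    (WittVector.frobenius w).coeff n ∈ K := by
  rw [WittVector.coeff_frobenius, WittVector.frobeniusPoly]
  simp only [map_add, map_pow, map_mul, MvPolynomial.aeval_X, MvPolynomial.aeval_C,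
    map_natCast, eq_intCast, Int.cast_natCast]
  apply K.add_mem
  · exact hpow _ (hw n)
  · apply hmul
    have h1 := aeval_sub_constant_mem I w.coeff hw (WittVector.frobeniusPolyAux p n)
    rwa [constantCoeff_frobeniusPolyAux, map_zero, sub_zero] at h1

end polyest



section pi

variable {R : Type*} [CommRing R] {π : R}

/-- The auxiliary ideal `(p π^k)`. -/
def CI (p : ℕ) (π : R) (k : ℕ) : Ideal R := Ideal.span {(p : R) * π ^ k}


lemma CI_le_pow_span {k : ℕ} : CI p π k ≤ Ideal.span {π} ^ k := by
  rw [Ideal.span_singleton_pow]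
  rw [CI, Ideal.span_singleton_le_span_singleton]
  exact Dvd.intro_left _ rfl

lemma CI_zero : CI p π 0 = Ideal.span {(p : R)} := by simp [CI]

variable (hdvd : π ^ p ∣ (p : R))
include hdvd

lemma pow_mem_CI {k : ℕ} {a : R} (ha : a ∈ CI p π k) : a ^ p ∈ CI p π (k + 1) := by
  obtain ⟨c, hc⟩ := hdvd
  rw [CI, Ideal.mem_span_singleton] at ha ⊢
  obtain ⟨t, ht⟩ := ha
  have hp2 : 2 ≤ p := hp.out.two_le
  subst ht
  have key : π ^ (k + 1) ∣ p ^ (p - 1) * π ^ (k * p) := by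
    have h1 : (p : R) ^ (p - 1) = π ^ (p * (p - 1)) * c ^ (p - 1) := by
      rw [hc, mul_pow, ← pow_mul]
    rw [h1, mul_comm (π ^ (p * (p-1))), mul_assoc]
    refine Dvd.dvd.mul_left ?_ _
    rw [← pow_add]
    apply pow_dvd_pow
    have h3 : k * 1 ≤ k * p := Nat.mul_le_mul_left k hp.out.one_le
    have h4 : 2 * 1 ≤ p * (p - 1) := Nat.mul_le_mul hp.out.two_le (by omega)
    omega
  have hsplit : ((p : R) * π ^ k * t) ^ p = (p : R) * (p ^ (p - 1) * π ^ (k * p)) * t ^ p := by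
    rw [mul_pow, mul_pow, ← pow_mul, ← mul_assoc]
    congr 2
    rw [← pow_succ']
    congr 1
    omega
  rw [hsplit]
  obtain ⟨u, hu⟩ := key
  exact ⟨u * t ^ p, by rw [hu]; ring⟩

lemma p_mul_mem_CI {k : ℕ} {a : R} (ha : a ∈ CI p π k) : (p : R) * a ∈ CI p π (k + 1) := by
  obtain ⟨c, hc⟩ := hdvd
  rw [CI, Ideal.mem_span_singleton] at ha ⊢
  obtain ⟨t, ht⟩ := ha
  subst ht
  have hp1 : 1 ≤ p := hp.out.one_le
  refine ⟨π ^ (p - 1) * c * t, ?_⟩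
  have : (p : R) = π ^ 1 * (π ^ (p - 1) * c) := by
    rw [← mul_assoc, ← pow_add, hc]
    congr 2
    omega
  calc (p:R) * ((p:R) * π ^ k * t) = ((p:R) * π ^ k) * ((p : R) * t) := by ring
    _ = ((p:R) * π ^ k) * (π ^ 1 * (π ^ (p-1) * c) * t) := by rw [← this]
    _ = (p:R) * π ^ (k+1) * (π ^ (p-1) * c * t) := by rw [pow_succ]; ring

end pi





section tF

variable {S : Type*} [CommRing S] [CharP S p]

/-- Truncated Witt vector Frobenius over a characteristic `p` ring. -/
noncomputable def tF (r : ℕ) : TruncatedWittVector p (r + 1) S →+* TruncatedWittVector p r S :=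
  wdescend (r + 1) ((WittVector.truncate r).comp WittVector.frobenius) (by
    intro x hx
    rw [WittVector.mem_ker_truncate] at hx
    rw [RingHom.mem_ker, RingHom.comp_apply, ← RingHom.mem_ker,
      WittVector.mem_ker_truncate]
    intro i hi
    rw [WittVector.coeff_frobenius_charP, hx i (by omega), zero_pow hp.out.ne_zero])

lemma tF_truncate (r : ℕ) (x : WittVector p S) :
    tF r (WittVector.truncate (r + 1) x) = WittVector.truncate r (WittVector.frobenius x) :=
  wdescend_truncate _ _ _ _

lemma coeff_tF (r : ℕ) (x : TruncatedWittVector p (r + 1) S) (i : Fin r) :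
    (tF r x).coeff i = x.coeff (Fin.castSucc i) ^ p := by
  conv_lhs => rw [← truncate_out' (r + 1) x]
  rw [tF_truncate, WittVector.coeff_truncate, WittVector.coeff_frobenius_charP]
  congr 1
  exact TruncatedWittVector.coeff_out x (Fin.castSucc i)

end tF

section tmap

variable {R : Type*} [CommRing R] {S : Type*} [CommRing S]

/-- Coefficientwise map of truncated Witt vectors. -/
noncomputable def tmap (f : R →+* S) (n : ℕ) :
    TruncatedWittVector p n R →+* TruncatedWittVector p n S :=
  wdescend n ((WittVector.truncate n).comp (WittVector.map f)) (by
    intro x hx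
    rw [WittVector.mem_ker_truncate] at hx
    rw [RingHom.mem_ker, RingHom.comp_apply, ← RingHom.mem_ker,
      WittVector.mem_ker_truncate]
    intro i hi
    rw [WittVector.map_coeff, hx i hi, map_zero])

lemma tmap_truncate (f : R →+* S) (n : ℕ) (x : WittVector p R) :
    tmap f n (WittVector.truncate n x) = WittVector.truncate n (WittVector.map f x) :=
  wdescend_truncate _ _ _ _

lemma coeff_tmap (f : R →+* S) (n : ℕ) (x : TruncatedWittVector p n R) (i : Fin n) :
    (tmap f n x).coeff i = f (x.coeff i) := by
  conv_lhs => rw [← truncate_out' n x]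
  rw [tmap_truncate, WittVector.coeff_truncate, WittVector.map_coeff,
    TruncatedWittVector.coeff_out]

lemma tmap_surjective (f : R →+* S) (hf : Surjective f) (n : ℕ) :
    Surjective (tmap (p := p) f n) := by
  intro t
  obtain ⟨T, rfl⟩ := WittVector.truncate_surjective p n S t
  obtain ⟨X, rfl⟩ := WittVector.map_surjective f hf T
  exact ⟨WittVector.truncate n X, tmap_truncate f n X⟩

lemma map_frobenius' (f : R →+* S) (X : WittVector p R) :
    WittVector.map f (WittVector.frobenius X) = WittVector.frobenius (WittVector.map f X) := by
  ext n
  rw [WittVector.map_coeff, WittVector.coeff_frobenius, WittVector.coeff_frobenius]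
  have hc : (WittVector.map f X).coeff = fun i => f (X.coeff i) := by
    funext i; rw [WittVector.map_coeff]
  rw [hc]
  calc f (MvPolynomial.aeval X.coeff (frobeniusPoly p n))
      = MvPolynomial.eval₂Hom (f.comp (algebraMap ℤ R)) (fun i => f (X.coeff i))
          (frobeniusPoly p n) := MvPolynomial.map_aeval _ _ _
    _ = MvPolynomial.eval₂Hom (algebraMap ℤ S) (fun i => f (X.coeff i)) (frobeniusPoly p n) :=
        MvPolynomial.eval₂Hom_congr (RingHom.ext_int _ _) rfl rfl
    _ = MvPolynomial.aeval (fun i => f (X.coeff i)) (frobeniusPoly p n) := by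
        rw [MvPolynomial.aeval_def]
        rfl

lemma tF_tmap {S : Type*} [CommRing S] [CharP S p] (f : R →+* S)
    (F : ∀ r : ℕ, TruncatedWittVector p (r + 1) R →+* TruncatedWittVector p r R)
    (hF : ∀ r : ℕ, (F r).comp (WittVector.truncate (r + 1)) =
      (WittVector.truncate r).comp WittVector.frobenius)
    (r : ℕ) (x : TruncatedWittVector p (r + 1) R) :
    tF r (tmap f (r + 1) x) = tmap f r (F r x) := by
  obtain ⟨X, rfl⟩ := WittVector.truncate_surjective p (r + 1) R x
  have h1 : F r (WittVector.truncate (r + 1) X) =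
      WittVector.truncate r (WittVector.frobenius X) := RingHom.congr_fun (hF r) X
  have h2 := map_frobenius' f X
  rw [tmap_truncate, tF_truncate, h1, tmap_truncate, h2]

end tmap


section Fcong

variable {R : Type*} [CommRing R] {π : R}

lemma map_eq_of_coeff_sub_mem (K : Ideal R) {x y : WittVector p R}
    (h : ∀ m, x.coeff m - y.coeff m ∈ K) :
    WittVector.map (Ideal.Quotient.mk K) x = WittVector.map (Ideal.Quotient.mk K) y := by
  ext m
  rw [WittVector.map_coeff, WittVector.map_coeff, Ideal.Quotient.mk_eq_mk_iff_sub_mem]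
  exact h m

lemma coeff_sub_mem_of_map_eq (K : Ideal R) {x y : WittVector p R}
    (h : WittVector.map (Ideal.Quotient.mk K) x = WittVector.map (Ideal.Quotient.mk K) y)
    (m : ℕ) : x.coeff m - y.coeff m ∈ K := by
  rw [← Ideal.Quotient.mk_eq_mk_iff_sub_mem]
  have := congrArg (fun w => WittVector.coeff w m) h
  simpa only [WittVector.map_coeff] using this

lemma coeff_out_of_ge {n : ℕ} (x : TruncatedWittVector p n R) {m : ℕ} (hm : ¬m < n) :
    x.out.coeff m = 0 := by
  show (if h : m < n then TruncatedWittVector.coeff ⟨m, h⟩ x else 0) = 0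
  exact dif_neg hm

variable (hdvd : π ^ p ∣ (p : R))
variable (F : ∀ r : ℕ, TruncatedWittVector p (r + 1) R →+* TruncatedWittVector p r R)
variable (hF : ∀ r : ℕ, (F r).comp (WittVector.truncate (r + 1)) =
    (WittVector.truncate r).comp WittVector.frobenius)

include hdvd hF in
lemma F_congr (k r : ℕ) {x y : TruncatedWittVector p (r + 1) R}
    (h : ∀ i, x.coeff i - y.coeff i ∈ CI p π k) (i : Fin r) :
    (F r x).coeff i - (F r y).coeff i ∈ CI p π (k + 1) := by
  set X := x.out with hX
  set Y := y.out with hY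
  have hXY : ∀ m, X.coeff m - Y.coeff m ∈ CI p π k := by
    intro m
    by_cases hm : m < r + 1
    · have hx1 : X.coeff m = x.coeff ⟨m, hm⟩ := TruncatedWittVector.coeff_out x ⟨m, hm⟩
      have hy1 : Y.coeff m = y.coeff ⟨m, hm⟩ := TruncatedWittVector.coeff_out y ⟨m, hm⟩
      rw [hx1, hy1]
      exact h _
    · rw [coeff_out_of_ge x hm, coeff_out_of_ge y hm, sub_zero]
      exact zero_mem _
  have hD : ∀ m, (X - Y).coeff m ∈ CI p π k := by
    have hmap := map_eq_of_coeff_sub_mem (CI p π k) hXY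
    have hz : WittVector.map (Ideal.Quotient.mk (CI p π k)) (X - Y) = 0 := by
      rw [map_sub, hmap, sub_self]
    intro m
    rw [← Ideal.Quotient.eq_zero_iff_mem]
    calc Ideal.Quotient.mk (CI p π k) ((X - Y).coeff m)
        = (WittVector.map (Ideal.Quotient.mk (CI p π k)) (X - Y)).coeff m :=
          (WittVector.map_coeff _ _ _).symm
      _ = 0 := by rw [hz, WittVector.zero_coeff]
  have hFD : ∀ m, (WittVector.frobenius (X - Y)).coeff m ∈ CI p π (k + 1) :=
    frobenius_coeff_mem _ _ (fun a ha => pow_mem_CI hdvd ha)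
      (fun a ha => p_mul_mem_CI hdvd ha) _ hD
  have hmap' : WittVector.map (Ideal.Quotient.mk (CI p π (k + 1))) (WittVector.frobenius X) =
      WittVector.map (Ideal.Quotient.mk (CI p π (k + 1))) (WittVector.frobenius Y) := by
    rw [← sub_eq_zero, ← map_sub, ← map_sub]
    ext m
    rw [WittVector.map_coeff, WittVector.zero_coeff, Ideal.Quotient.eq_zero_iff_mem]
    exact hFD m
  have hx' : F r x = WittVector.truncate r (WittVector.frobenius X) := by
    conv_lhs => rw [← truncate_out' (r + 1) x]
    exact RingHom.congr_fun (hF r) X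
  have hy' : F r y = WittVector.truncate r (WittVector.frobenius Y) := by
    conv_lhs => rw [← truncate_out' (r + 1) y]
    exact RingHom.congr_fun (hF r) Y
  rw [hx', hy', WittVector.coeff_truncate, WittVector.coeff_truncate]
  exact coeff_sub_mem_of_map_eq _ hmap' _

end Fcong

section adic

variable {R : Type*} [CommRing R] {π : R}

lemma smul_top_eq (I : Ideal R) : (I • (⊤ : Ideal R) : Ideal R) = I := by
  rw [smul_eq_mul, Ideal.mul_top]

lemma haus_eq_zero (hcomplete : IsAdicComplete (Ideal.span {π}) R) {a : R}
    (h : ∀ k, a ∈ Ideal.span {π} ^ k) : a = 0 := by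
  refine IsHausdorff.haus hcomplete.toIsHausdorff a fun n => ?_
  rw [SModEq.zero, smul_top_eq]
  exact h n

lemma chain_sub_mem {f : ℕ → R}
    (h : ∀ k, f (k + 1) - f k ∈ Ideal.span {π} ^ k) {m n : ℕ} (hmn : m ≤ n) :
    f n - f m ∈ Ideal.span {π} ^ m := by
  induction n, hmn using Nat.le_induction with
  | base => rw [sub_self]; exact zero_mem _
  | succ n hmn ih =>
      have h1 : f (n + 1) - f m = (f (n + 1) - f n) + (f n - f m) := by ring
      rw [h1]
      exact add_mem (Ideal.pow_le_pow_right hmn (h n)) ih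

lemma adic_limit (hcomplete : IsAdicComplete (Ideal.span {π}) R) (f : ℕ → R)
    (h : ∀ k, f (k + 1) - f k ∈ Ideal.span {π} ^ k) :
    ∃ L : R, ∀ k, L - f k ∈ Ideal.span {π} ^ k := by
  obtain ⟨L, hL⟩ := IsPrecomplete.prec hcomplete.toIsPrecomplete
    (f := f) (by
      intro m n hmn
      rw [SModEq.sub_mem, smul_top_eq]
      have := chain_sub_mem (π := π) h hmn
      simpa using (neg_mem this : -(f n - f m) ∈ _))
  refine ⟨L, fun k => ?_⟩
  have := hL k
  rw [SModEq.sub_mem, smul_top_eq] at this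
  simpa using (neg_mem this : -(f k - L) ∈ _)

end adic

section Theta

variable {S : Type*} [CommRing S] [CharP S p]

lemma mem_wfl {R' : Type*} [CommRing R'] (F' : ∀ r : ℕ,
    TruncatedWittVector p (r + 1) R' →+* TruncatedWittVector p r R')
    (f : ∀ r, TruncatedWittVector p r R') :
    f ∈ wittFrobeniusLimit p R' F' ↔ ∀ r, F' r (f (r + 1)) = f r := Iff.rfl

/-- The comparison map `W(S^♭) → ∏_r W_r(S)`. -/
noncomputable def Theta : WittVector p (Perfection S p) →+* ∀ r, TruncatedWittVector p r S :=
  Pi.ringHom fun r => (WittVector.truncate r).comp (WittVector.map (Perfection.coeff S p r))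

lemma Theta_coeff (x : WittVector p (Perfection S p)) (r : ℕ) (i : Fin r) :
    (Theta x r).coeff i = Perfection.coeff S p r (x.coeff i) := by
  show ((WittVector.truncate r).comp (WittVector.map (Perfection.coeff S p r)) x).coeff i = _
  rw [RingHom.comp_apply, WittVector.coeff_truncate, WittVector.map_coeff]

lemma Theta_mem (x : WittVector p (Perfection S p)) :
    Theta x ∈ wittFrobeniusLimit p S (fun r => tF r) := by
  rw [mem_wfl]
  intro r
  ext i
  rw [coeff_tF, Theta_coeff, Theta_coeff]
  have : ((Fin.castSucc i : Fin (r + 1)) : ℕ) = (i : ℕ) := rfl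
  rw [this, Perfection.coeff_pow_p']

lemma perf_coeff_le (f : Perfection S p) {n m : ℕ} (h : n ≤ m) :
    Perfection.coeff S p n f = Perfection.coeff S p m f ^ p ^ (m - n) := by
  induction m, h using Nat.le_induction with
  | base => simp
  | succ m hm ih =>
      have h1 : p * p ^ (m - n) = p ^ (m + 1 - n) := by
        rw [show m + 1 - n = (m - n) + 1 by omega, pow_succ, mul_comm]
      rw [ih, ← Perfection.coeff_pow_p' f m, ← pow_mul, h1]

/-- The comparison map, restricted to the limit subring. -/
noncomputable def ThetaL : WittVector p (Perfection S p) →+*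
    (wittFrobeniusLimit p S (fun r => tF r)) :=
  RingHom.codRestrict Theta _ Theta_mem

lemma ThetaL_injective : Injective (ThetaL (p := p) (S := S)) := by
  intro x y hxy
  have h : ∀ r, Theta x r = Theta y r := fun r =>
    congrFun (congrArg Subtype.val hxy) r
  apply WittVector.ext
  intro i
  apply Perfection.ext
  intro n
  have hi : i < n + (i + 1) := by omega
  have hn : n ≤ n + (i + 1) := by omega
  have h2 := congrArg (fun t => TruncatedWittVector.coeff ⟨i, hi⟩ t) (h (n + (i + 1)))
  simp only [Theta_coeff] at h2
  rw [perf_coeff_le (x.coeff i) hn, perf_coeff_le (y.coeff i) hn]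
  rw [h2]

lemma ThetaL_surjective : Surjective (ThetaL (p := p) (S := S)) := by
  rintro ⟨Y, hY⟩
  have hYmem : ∀ r, tF r (Y (r + 1)) = Y r := hY
  have cstep : ∀ (m i : ℕ) (h : i < m) (h' : i < m + 1),
      TruncatedWittVector.coeff ⟨i, h⟩ (Y m) =
        TruncatedWittVector.coeff ⟨i, h'⟩ (Y (m + 1)) ^ p := by
    intro m i h h'
    have h2 := congrArg (TruncatedWittVector.coeff ⟨i, h⟩) (hYmem m)
    rw [← h2]
    show (tF m (Y (m + 1))).coeff ⟨i, h⟩ = _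
    rw [coeff_tF]
    rfl
  have cpow : ∀ (m k i : ℕ) (h : i < m) (h' : i < m + k),
      TruncatedWittVector.coeff ⟨i, h⟩ (Y m) =
        TruncatedWittVector.coeff ⟨i, h'⟩ (Y (m + k)) ^ p ^ k := by
    intro m k
    induction k with
    | zero => intro i h h'; simp
    | succ k ih =>
        intro i h h'
        have h'' : i < m + k := by omega
        rw [ih i h h'', cstep (m + k) i h'' h', ← pow_mul, ← pow_succ']
        rfl
  have ycast : ∀ {m m' : ℕ} (_ : m = m') (i : ℕ) (h1 : i < m) (h2 : i < m'),
      TruncatedWittVector.coeff ⟨i, h1⟩ (Y m) = TruncatedWittVector.coeff ⟨i, h2⟩ (Y m') := by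
    rintro m m' rfl i h1 h2
    rfl
  -- construct the preimage
  have hprop : ∀ i : ℕ, ∀ n : ℕ,
      (TruncatedWittVector.coeff ⟨i, by omega⟩ (Y (i + 1 + (n + 1))) ^ p ^ (i + 1)) ^ p =
        TruncatedWittVector.coeff ⟨i, by omega⟩ (Y (i + 1 + n)) ^ p ^ (i + 1) := by
    intro i n
    rw [← pow_mul, mul_comm (p ^ (i + 1)) p, pow_mul]
    congr 1
    exact (cstep (i + 1 + n) i (by omega) (by omega)).symm
  refine ⟨WittVector.mk p (fun i =>
    (⟨fun n => TruncatedWittVector.coeff ⟨i, by omega⟩ (Y (i + 1 + n)) ^ p ^ (i + 1),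
      fun n => hprop i n⟩ : Perfection S p)), ?_⟩
  apply Subtype.ext
  funext r
  show Theta _ r = Y r
  ext i
  rw [Theta_coeff]
  have hx : (WittVector.mk p (fun i =>
      (⟨fun n => TruncatedWittVector.coeff ⟨i, by omega⟩ (Y (i + 1 + n)) ^ p ^ (i + 1),
        fun n => hprop i n⟩ : Perfection S p))).coeff (i : ℕ) =
      (⟨fun n => TruncatedWittVector.coeff ⟨(i : ℕ), by omega⟩ (Y ((i : ℕ) + 1 + n)) ^ p ^ ((i : ℕ) + 1),
        fun n => hprop (i : ℕ) n⟩ : Perfection S p) := rfl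
  refine (congrArg (Perfection.coeff S p r) hx).trans ?_
  show TruncatedWittVector.coeff ⟨(i : ℕ), by omega⟩ (Y ((i : ℕ) + 1 + r)) ^ p ^ ((i : ℕ) + 1) = _
  -- goal : coeff ⟨i, _⟩ (Y (i+1+r)) ^ p ^ (i+1) = coeff i (Y r)
  have h1 := cpow r (i + 1) (i : ℕ) i.isLt (by omega)
  rw [ycast (show (i : ℕ) + 1 + r = r + ((i : ℕ) + 1) by omega) (i : ℕ) (by omega) (by omega)]
  rw [← h1]

end Theta

section Phi

variable {R : Type*} [CommRing R] {S : Type*} [CommRing S] [CharP S p]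

/-- The comparison map between the two Frobenius limits, induced by `f : R →+* S`. -/
noncomputable def Phi (f : R →+* S)
    (F : ∀ r : ℕ, TruncatedWittVector p (r + 1) R →+* TruncatedWittVector p r R)
    (hF : ∀ r : ℕ, (F r).comp (WittVector.truncate (r + 1)) =
      (WittVector.truncate r).comp WittVector.frobenius) :
    (wittFrobeniusLimit p R F) →+* (wittFrobeniusLimit p S (fun r => tF r)) :=
  RingHom.codRestrict
    ((Pi.ringHom (fun r => (tmap f r).comp (Pi.evalRingHom _ r))).comp (Subring.subtype _)) _
    (by
      intro y
      rw [mem_wfl]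
      intro r
      show tF r (tmap f (r + 1) (y.1 (r + 1))) = tmap f r (y.1 r)
      rw [tF_tmap f F hF r]
      congr 1
      exact y.2 r)

lemma Phi_val (f : R →+* S) (F) (hF) (y : wittFrobeniusLimit p R F) (r : ℕ) :
    ((Phi f F hF y : wittFrobeniusLimit p S (fun r => tF r)) : ∀ r, TruncatedWittVector p r S) r
      = tmap f r (y.1 r) := rfl

variable {π : R}

lemma Phi_injective (f : R →+* S)
    (hkf : ∀ a b : R, f a = f b ↔ a - b ∈ Ideal.span {(p : R)})
    (hdvd : π ^ p ∣ (p : R)) (hcomplete : IsAdicComplete (Ideal.span {π}) R)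
    (F : ∀ r : ℕ, TruncatedWittVector p (r + 1) R →+* TruncatedWittVector p r R)
    (hF : ∀ r : ℕ, (F r).comp (WittVector.truncate (r + 1)) =
      (WittVector.truncate r).comp WittVector.frobenius) :
    Injective (Phi f F hF) := by
  intro Y Y' h
  have h1 : ∀ r, tmap f r (Y.1 r) = tmap f r (Y'.1 r) := fun r =>
    congrFun (congrArg Subtype.val h) r
  have hYm : ∀ r, F r (Y.1 (r + 1)) = Y.1 r := Y.2
  have hY'm : ∀ r, F r (Y'.1 (r + 1)) = Y'.1 r := Y'.2
  have hCI : ∀ k r (i : Fin r), (Y.1 r).coeff i - (Y'.1 r).coeff i ∈ CI p π k := by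
    intro k
    induction k with
    | zero =>
        intro r i
        rw [CI_zero, ← hkf]
        have h2 := congrArg (TruncatedWittVector.coeff i) (h1 r)
        rwa [coeff_tmap, coeff_tmap] at h2
    | succ k ih =>
        intro r i
        rw [← hYm r, ← hY'm r]
        exact F_congr hdvd F hF k r (fun j => ih (r + 1) j) i
  apply Subtype.ext
  funext r
  apply TruncatedWittVector.ext
  intro i
  have hz : ∀ n, (Y.1 r).coeff i - (Y'.1 r).coeff i ∈ Ideal.span {π} ^ n := fun n =>
    CI_le_pow_span (hCI n r i)
  exact sub_eq_zero.mp (haus_eq_zero hcomplete hz)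

lemma Phi_surjective (f : R →+* S) (hfs : Surjective f)
    (hkf : ∀ a b : R, f a = f b ↔ a - b ∈ Ideal.span {(p : R)})
    (hdvd : π ^ p ∣ (p : R)) (hcomplete : IsAdicComplete (Ideal.span {π}) R)
    (F : ∀ r : ℕ, TruncatedWittVector p (r + 1) R →+* TruncatedWittVector p r R)
    (hF : ∀ r : ℕ, (F r).comp (WittVector.truncate (r + 1)) =
      (WittVector.truncate r).comp WittVector.frobenius) :
    Surjective (Phi f F hF) := by
  rintro ⟨Yb, hYb⟩
  have hYbm : ∀ r, tF r (Yb (r + 1)) = Yb r := hYb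
  have hzex : ∀ r, ∃ z, tmap f r z = Yb r := fun r => tmap_surjective f hfs r (Yb r)
  choose z hzspec using hzex
  set D : (∀ r, TruncatedWittVector p r R) → ∀ r, TruncatedWittVector p r R :=
    fun t r => F r (t (r + 1)) with hD
  set t : ℕ → ∀ r, TruncatedWittVector p r R := fun k => D^[k] z with ht
  have htsucc : ∀ k r, t (k + 1) r = F r (t k (r + 1)) := by
    intro k r
    show (D^[k + 1] z) r = _
    rw [Function.iterate_succ_apply']
  have hq : ∀ k r, tmap f r (t k r) = Yb r := by
    intro k
    induction k with
    | zero => exact fun r => hzspec r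
    | succ k ih =>
        intro r
        rw [htsucc k r, ← tF_tmap f F hF r, ih (r + 1), hYbm r]
  have hstep : ∀ k r (i : Fin r), (t (k + 1) r).coeff i - (t k r).coeff i ∈ CI p π k := by
    intro k
    induction k with
    | zero =>
        intro r i
        rw [CI_zero, ← hkf]
        have h1 := congrArg (TruncatedWittVector.coeff i) (hq 1 r)
        have h0 := congrArg (TruncatedWittVector.coeff i) (hq 0 r)
        rw [coeff_tmap] at h1 h0
        rw [h1, h0]
    | succ k ih =>
        intro r i
        rw [htsucc (k + 1) r, htsucc k r]
        exact F_congr hdvd F hF k r (fun j => ih (r + 1) j) i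
  have main : ∀ r (i : Fin r), ∃ L : R, ∀ k, L - (t k r).coeff i ∈ CI p π k := by
    intro r i
    have hd : ∀ k, ∃ e, (t (k + 1) r).coeff i - (t k r).coeff i = (p : R) * π ^ k * e := by
      intro k
      have h2 := hstep k r i
      rw [CI, Ideal.mem_span_singleton] at h2
      obtain ⟨e, he⟩ := h2
      exact ⟨e, he⟩
    choose e he using hd
    set s : ℕ → R := fun k => ∑ j ∈ Finset.range k, π ^ j * e j with hs
    have hsstep : ∀ k, s (k + 1) - s k ∈ Ideal.span {π} ^ k := by
      intro k
      have h3 : s (k + 1) - s k = π ^ k * e k := by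
        rw [hs]
        simp [Finset.sum_range_succ]
      rw [h3, Ideal.span_singleton_pow, Ideal.mem_span_singleton]
      exact Dvd.intro _ rfl
    obtain ⟨E, hE⟩ := adic_limit hcomplete s hsstep
    refine ⟨(t 0 r).coeff i + (p : R) * E, fun k => ?_⟩
    have htel : (t k r).coeff i - (t 0 r).coeff i = (p : R) * s k := by
      calc (t k r).coeff i - (t 0 r).coeff i
          = ∑ j ∈ Finset.range k, ((t (j + 1) r).coeff i - (t j r).coeff i) :=
            (Finset.sum_range_sub (fun j => (t j r).coeff i) k).symm
        _ = ∑ j ∈ Finset.range k, (p : R) * (π ^ j * e j) :=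
            Finset.sum_congr rfl (fun j _ => by rw [he j]; ring)
        _ = (p : R) * s k := by rw [hs, Finset.mul_sum]
    have h4 : (t 0 r).coeff i + (p : R) * E - (t k r).coeff i = (p : R) * (E - s k) := by
      linear_combination -htel
    rw [h4]
    have hEk := hE k
    rw [Ideal.span_singleton_pow, Ideal.mem_span_singleton] at hEk
    obtain ⟨w, hw⟩ := hEk
    rw [CI, Ideal.mem_span_singleton]
    exact ⟨w, by rw [hw]; ring⟩
  choose Lf hLf using main
  set Yv : ∀ r, TruncatedWittVector p r R :=
    fun r => TruncatedWittVector.mk p (fun i => Lf r i) with hYv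
  have hYvc : ∀ r (i : Fin r) k, (Yv r).coeff i - (t k r).coeff i ∈ CI p π k := by
    intro r i k
    have hcoeff : (Yv r).coeff i = Lf r i := by rw [hYv]; exact TruncatedWittVector.coeff_mk _ _
    rw [hcoeff]
    exact hLf r i k
  have hmem : ∀ r, F r (Yv (r + 1)) = Yv r := by
    intro r
    apply TruncatedWittVector.ext
    intro i
    have key : ∀ n, (F r (Yv (r + 1))).coeff i - (Yv r).coeff i ∈ Ideal.span {π} ^ n := by
      intro n
      match n with
      | 0 => rw [pow_zero, Ideal.one_eq_top]; exact Submodule.mem_top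
      | (k + 1) =>
        have h1 : (F r (Yv (r + 1))).coeff i - (F r (t k (r + 1))).coeff i ∈ CI p π (k + 1) :=
          F_congr hdvd F hF k r (fun j => hYvc (r + 1) j k) i
        have h2 : (Yv r).coeff i - (t (k + 1) r).coeff i ∈ CI p π (k + 1) := hYvc r i (k + 1)
        have h3 : (F r (Yv (r + 1))).coeff i - (Yv r).coeff i =
            ((F r (Yv (r + 1))).coeff i - (F r (t k (r + 1))).coeff i) -
              ((Yv r).coeff i - (t (k + 1) r).coeff i) := by
          rw [← htsucc k r]
          ring
        rw [h3]
        exact sub_mem (CI_le_pow_span h1) (CI_le_pow_span h2)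
    exact sub_eq_zero.mp (haus_eq_zero hcomplete key)
  refine ⟨⟨Yv, hmem⟩, ?_⟩
  apply Subtype.ext
  funext r
  show tmap f r (Yv r) = Yb r
  apply TruncatedWittVector.ext
  intro i
  rw [coeff_tmap]
  have h0 : f ((Yv r).coeff i) = f ((t 0 r).coeff i) := by
    rw [hkf]
    have h5 := hYvc r i 0
    rwa [CI_zero] at h5
  rw [h0]
  have h6 := congrArg (TruncatedWittVector.coeff i) (hq 0 r)
  rwa [coeff_tmap] at h6

end Phi

section Key

variable {R : Type*} [CommRing R]

lemma key [CharP (R ⧸ Ideal.span {(p : R)}) p]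
    (π : R) (hcomplete : IsAdicComplete (Ideal.span {π}) R) (hdvd : π ^ p ∣ (p : R))
    (F : ∀ r : ℕ, TruncatedWittVector p (r + 1) R →+* TruncatedWittVector p r R)
    (hF : ∀ r : ℕ, (F r).comp (WittVector.truncate (r + 1)) =
      (WittVector.truncate r).comp WittVector.frobenius) :
    Nonempty (WittVector p (Perfection (R ⧸ Ideal.span {(p : R)}) p) ≃+*
      wittFrobeniusLimit p R F) := by
  have hkf : ∀ a b : R, Ideal.Quotient.mk (Ideal.span {(p : R)}) a =
      Ideal.Quotient.mk (Ideal.span {(p : R)}) b ↔ a - b ∈ Ideal.span {(p : R)} :=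
    fun a b => Ideal.Quotient.mk_eq_mk_iff_sub_mem a b
  have e1 := RingEquiv.ofBijective (ThetaL (p := p) (S := R ⧸ Ideal.span {(p : R)}))
    ⟨ThetaL_injective, ThetaL_surjective⟩
  have e2 := RingEquiv.ofBijective (Phi (Ideal.Quotient.mk (Ideal.span {(p : R)})) F hF)
    ⟨Phi_injective _ hkf hdvd hcomplete F hF,
     Phi_surjective _ Ideal.Quotient.mk_surjective hkf hdvd hcomplete F hF⟩
  exact ⟨e1.trans e2.symm⟩

end Key

end WittLimitAux

/-- For a perfectoid ring `R₀`, the inverse limit of the truncated Witt vector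
rings `W_r(R₀)` along the Witt vector Frobenius maps `F : W_{r+1}(R₀) → W_r(R₀)` is isomorphic
to `A_inf(R₀) := W(R₀^♭)`, the Witt vectors of the tilt of `R₀`. -/
theorem witt_limit_frobenius_iso_ainf
    (p : ℕ) [Fact p.Prime] (R : Type*) [CommRing R]
    [CharP (R ⧸ Ideal.span {(p : R)}) p]
    -- `R` is perfectoid:
    (π : R) (hcomplete : IsAdicComplete (Ideal.span {π}) R)
    (hdvd : π ^ p ∣ (p : R))
    (hfrob : Function.Surjective (frobenius (R ⧸ Ideal.span {(p : R)}) p))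
    (θ : WittVector p (Perfection (R ⧸ Ideal.span {(p : R)}) p) →+* R)
    (hθsurj : Function.Surjective θ) (hθker : (RingHom.ker θ).IsPrincipal)
    -- the Witt vector Frobenius maps `W_{r+1}(R) → W_r(R)`:
    (F : ∀ r : ℕ, TruncatedWittVector p (r + 1) R →+* TruncatedWittVector p r R)
    (hF : ∀ r : ℕ, (F r).comp (WittVector.truncate (r + 1)) =
      (WittVector.truncate r).comp WittVector.frobenius) :
    Nonempty (WittVector p (Perfection (R ⧸ Ideal.span {(p : R)}) p) ≃+*
      wittFrobeniusLimit p R F) := by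
  exact WittLimitAux.key π hcomplete hdvd F hF
end

section
/- Let A be a commutative ring, ξ ∈ A a non-zero-divisor, and consider the graded A-algebra map A[u,v]/(uv − ξ) → A[σ, σ^{-1}] determined by u ↦ ξσ and v ↦ σ^{-1} (deg u = 2 = deg σ, deg v = −2). This map is a well-defined injective graded ring homomorphism whose image in degree 2i is ξ^{max(i,0)}·A·σ^i. -/
set_option maxHeartbeats 1000000
set_option synthInstance.maxHeartbeats 400000

open MvPolynomial

namespace Statement19Aux

variable {A : Type*} [CommRing A]

lemma mk_rel (ξ : A) :
    Ideal.Quotient.mk (Ideal.span {(X 0 : MvPolynomial (Fin 2) A) * X 1 - C ξ}) (X 0 * X 1) =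
      Ideal.Quotient.mk _ (C ξ) := by
  rw [Ideal.Quotient.eq]
  exact Ideal.subset_span rfl

lemma reduce (ξ : A) (k a b : ℕ) (c : A) :
    Ideal.Quotient.mk (Ideal.span {(X 0 : MvPolynomial (Fin 2) A) * X 1 - C ξ})
        (C c * X 0 ^ (a + k) * X 1 ^ (b + k)) =
      Ideal.Quotient.mk _ (C (c * ξ ^ k) * X 0 ^ a * X 1 ^ b) := by
  induction k with
  | zero => simp
  | succ k ih =>
    have h1 : (C c * X 0 ^ (a + (k + 1)) * X 1 ^ (b + (k + 1)) : MvPolynomial (Fin 2) A)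
        = (C c * X 0 ^ (a + k) * X 1 ^ (b + k)) * (X 0 * X 1) := by ring
    have h2 : (C (c * ξ ^ (k + 1)) * X 0 ^ a * X 1 ^ b : MvPolynomial (Fin 2) A)
        = (C (c * ξ ^ k) * X 0 ^ a * X 1 ^ b) * (C ξ) := by
      rw [pow_succ, ← mul_assoc c, map_mul]; ring
    rw [h1, h2,
      map_mul (Ideal.Quotient.mk _) (C c * X 0 ^ (a + k) * X 1 ^ (b + k)) (X 0 * X 1),
      map_mul (Ideal.Quotient.mk _) (C (c * ξ ^ k) * X 0 ^ a * X 1 ^ b) (C ξ), ih, mk_rel]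

/-- normal form polynomial -/
noncomputable def N (a b : ℕ →₀ A) : MvPolynomial (Fin 2) A :=
  a.sum (fun n c => C c * X 0 ^ n) + b.sum (fun m c => C c * X 1 ^ (m + 1))

lemma N_add (a₁ a₂ b₁ b₂ : ℕ →₀ A) :
    N (a₁ + a₂) (b₁ + b₂) = N a₁ b₁ + N a₂ b₂ := by
  unfold N
  rw [Finsupp.sum_add_index (by intros; simp) (by intro i _ c d; rw [map_add]; ring),
    Finsupp.sum_add_index (by intros; simp) (by intro i _ c d; rw [map_add]; ring)]
  ring

lemma rep (ξ : A)
    (x : MvPolynomial (Fin 2) A ⧸ Ideal.span {(X 0 : MvPolynomial (Fin 2) A) * X 1 - C ξ}) :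
    ∃ a b : ℕ →₀ A, x = Ideal.Quotient.mk _ (N a b) := by
  obtain ⟨p, rfl⟩ := Ideal.Quotient.mk_surjective x
  induction p using MvPolynomial.induction_on' with
  | add p q hp hq =>
    obtain ⟨a₁, b₁, h₁⟩ := hp
    obtain ⟨a₂, b₂, h₂⟩ := hq
    exact ⟨a₁ + a₂, b₁ + b₂, by rw [map_add, h₁, h₂, N_add, map_add]⟩
  | monomial s c =>
    have hmon : (monomial s c : MvPolynomial (Fin 2) A) = C c * X 0 ^ (s 0) * X 1 ^ (s 1) := by
      rw [monomial_eq, Finsupp.prod_fintype _ _ (fun i => pow_zero _), Fin.prod_univ_two,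
        mul_assoc]
    by_cases h : s 1 ≤ s 0
    · refine ⟨Finsupp.single (s 0 - s 1) (c * ξ ^ (s 1)), 0, ?_⟩
      have e : s 0 = (s 0 - s 1) + s 1 := (Nat.sub_add_cancel h).symm
      have hred := reduce ξ (s 1) (s 0 - s 1) 0 c
      rw [pow_zero, mul_one, zero_add] at hred
      rw [hmon]
      nth_rewrite 1 [e]
      rw [hred]
      congr 1
      unfold N
      rw [Finsupp.sum_single_index (by simp), Finsupp.sum_zero_index, add_zero]
    · push_neg at h
      refine ⟨0, Finsupp.single (s 1 - s 0 - 1) (c * ξ ^ (s 0)), ?_⟩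
      have e : s 1 = (s 1 - s 0 - 1 + 1) + s 0 := by omega
      have hred := reduce ξ (s 0) 0 (s 1 - s 0 - 1 + 1) c
      rw [zero_add, pow_zero, mul_one] at hred
      rw [hmon]
      nth_rewrite 1 [e]
      rw [hred]
      congr 1
      unfold N
      rw [Finsupp.sum_zero_index, Finsupp.sum_single_index (by simp), zero_add]

end Statement19Aux

open Statement19Aux in
theorem map_to_laurent_injective_image
    {A : Type*} [CommRing A] (ξ : A) (hξ : ξ ∈ nonZeroDivisors A)
    (g : (MvPolynomial (Fin 2) A ⧸
        Ideal.span {(X 0 : MvPolynomial (Fin 2) A) * X 1 - C ξ}) →+*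
      LaurentPolynomial A)
    (hgu : g (Ideal.Quotient.mk _ (X 0 : MvPolynomial (Fin 2) A)) =
      LaurentPolynomial.C ξ * LaurentPolynomial.T 1)
    (hgv : g (Ideal.Quotient.mk _ (X 1 : MvPolynomial (Fin 2) A)) =
      LaurentPolynomial.T (-1))
    (hgC : ∀ a : A, g (Ideal.Quotient.mk _ (C a : MvPolynomial (Fin 2) A)) =
      LaurentPolynomial.C a) :
    Function.Injective g ∧
      ∀ (i : ℤ) (a : A),
        (LaurentPolynomial.C a * LaurentPolynomial.T i ∈ Set.range g ↔
          a ∈ Ideal.span {ξ ^ i.toNat}) := by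
  classical
  -- value of g on u-monomials
  have hgu' : ∀ (n : ℕ) (c : A),
      g (Ideal.Quotient.mk (Ideal.span {(X 0 : MvPolynomial (Fin 2) A) * X 1 - C ξ}) (C c * X 0 ^ n)) =
        (AddMonoidAlgebra.single (n : ℤ) (c * ξ ^ n) : LaurentPolynomial A) := by
    intro n c
    rw [map_mul, map_pow, map_mul g, map_pow g, hgu, hgC,
      LaurentPolynomial.single_eq_C_mul_T, mul_pow, ← map_pow, LaurentPolynomial.T_pow,
      map_mul, mul_one]
    ring
  have hgv' : ∀ (m : ℕ) (c : A),
      g (Ideal.Quotient.mk (Ideal.span {(X 0 : MvPolynomial (Fin 2) A) * X 1 - C ξ}) (C c * X 1 ^ (m + 1))) =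
        (AddMonoidAlgebra.single (-(m + 1) : ℤ) c : LaurentPolynomial A) := by
    intro m c
    rw [map_mul, map_pow, map_mul g, map_pow g, hgv, hgC,
      LaurentPolynomial.single_eq_C_mul_T, LaurentPolynomial.T_pow]
    congr 1
    push_cast
    ring
  -- value of g on normal forms
  have hgN : ∀ a b : ℕ →₀ A,
      g (Ideal.Quotient.mk (Ideal.span {(X 0 : MvPolynomial (Fin 2) A) * X 1 - C ξ}) (N a b)) =
        a.sum (fun n c => (AddMonoidAlgebra.single (n : ℤ) (c * ξ ^ n) : LaurentPolynomial A)) +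
        b.sum (fun m c => (AddMonoidAlgebra.single (-(m + 1) : ℤ) c : LaurentPolynomial A)) := by
    intro a b
    unfold N
    rw [map_add, map_add, map_finsuppSum, map_finsuppSum, map_finsuppSum, map_finsuppSum]
    congr 1
    · exact Finsupp.sum_congr fun n _ => hgu' n (a n)
    · exact Finsupp.sum_congr fun m _ => hgv' m (b m)
  -- coefficient computations
  have coefA : ∀ (a : ℕ →₀ A) (k : ℕ),
      (a.sum (fun n c => (AddMonoidAlgebra.single (n : ℤ) (c * ξ ^ n) : LaurentPolynomial A))).coeff (k : ℤ)
        = a k * ξ ^ k := by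
    intro a k
    rw [AddMonoidAlgebra.coeff_finsuppSum, Finsupp.sum_apply]
    have h1 : (a.sum fun n c =>
          (AddMonoidAlgebra.single ((n : ℕ) : ℤ) (c * ξ ^ n) : LaurentPolynomial A).coeff ((k : ℕ) : ℤ))
        = a.sum fun n c => if n = k then c * ξ ^ n else 0 := by
      apply Finsupp.sum_congr
      intro n _
      by_cases h : n = k
      · subst h; rw [AddMonoidAlgebra.coeff_single, Finsupp.single_apply, if_pos rfl, if_pos rfl]
      · rw [AddMonoidAlgebra.coeff_single, Finsupp.single_apply, if_neg (by omega), if_neg h]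
    rw [h1, Finsupp.sum_ite_eq']
    by_cases hk : k ∈ a.support
    · simp [hk]
    · simp [hk, Finsupp.notMem_support_iff.mp hk]
  have coefAneg : ∀ (a : ℕ →₀ A) (m : ℕ),
      (a.sum (fun n c => (AddMonoidAlgebra.single (n : ℤ) (c * ξ ^ n) : LaurentPolynomial A))).coeff
          (-(m + 1) : ℤ) = 0 := by
    intro a m
    rw [AddMonoidAlgebra.coeff_finsuppSum, Finsupp.sum_apply]
    apply Finset.sum_eq_zero
    intro n _
    simp only [AddMonoidAlgebra.coeff_single, Finsupp.single_apply]
    rw [if_neg (by omega)]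
  have coefB : ∀ (b : ℕ →₀ A) (m : ℕ),
      (b.sum (fun m c => (AddMonoidAlgebra.single (-(m + 1) : ℤ) c : LaurentPolynomial A))).coeff
          (-(m + 1) : ℤ) = b m := by
    intro b m
    rw [AddMonoidAlgebra.coeff_finsuppSum, Finsupp.sum_apply]
    have h1 : (b.sum fun m' c =>
          (AddMonoidAlgebra.single (-((m' : ℕ) + 1) : ℤ) c : LaurentPolynomial A).coeff (-((m : ℕ) + 1) : ℤ))
        = b.sum fun m' c => if m' = m then c else 0 := by
      apply Finsupp.sum_congr
      intro m' _
      by_cases h : m' = m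
      · subst h; rw [AddMonoidAlgebra.coeff_single, Finsupp.single_apply, if_pos rfl, if_pos rfl]
      · rw [AddMonoidAlgebra.coeff_single, Finsupp.single_apply, if_neg (by omega), if_neg h]
    rw [h1]
    exact Finsupp.sum_ite_self_eq' b m
  have coefBpos : ∀ (b : ℕ →₀ A) (k : ℕ),
      (b.sum (fun m c => (AddMonoidAlgebra.single (-(m + 1) : ℤ) c : LaurentPolynomial A))).coeff (k : ℤ)
        = 0 := by
    intro b k
    rw [AddMonoidAlgebra.coeff_finsuppSum, Finsupp.sum_apply]
    apply Finset.sum_eq_zero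
    intro m _
    simp only [AddMonoidAlgebra.coeff_single, Finsupp.single_apply]
    rw [if_neg (by omega)]
  constructor
  · rw [injective_iff_map_eq_zero]
    intro x hx
    obtain ⟨a, b, rfl⟩ := rep ξ x
    rw [hgN] at hx
    have ha : a = 0 := by
      ext k
      have := congrArg (fun f : LaurentPolynomial A => f.coeff (k : ℤ)) hx
      simp only [AddMonoidAlgebra.coeff_add, Finsupp.add_apply] at this
      rw [coefA, coefBpos, add_zero] at this
      have := (mem_nonZeroDivisors_iff.mp (pow_mem hξ k)).2 _ this
      simpa using this
    have hb : b = 0 := by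
      ext m
      have := congrArg (fun f : LaurentPolynomial A => f.coeff (-(m + 1) : ℤ)) hx
      simp only [AddMonoidAlgebra.coeff_add, Finsupp.add_apply] at this
      rw [coefAneg, coefB, zero_add] at this
      simpa using this
    rw [ha, hb]
    have : (N 0 0 : MvPolynomial (Fin 2) A) = 0 := by
      unfold N; rw [Finsupp.sum_zero_index, Finsupp.sum_zero_index, add_zero]
    rw [this, map_zero]
  · intro i a
    constructor
    · rintro ⟨x, hx⟩
      obtain ⟨aF, bF, rfl⟩ := rep ξ x
      rw [hgN] at hx
      by_cases hi : 0 ≤ i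
      · have hcast : ((i.toNat : ℤ)) = i := Int.toNat_of_nonneg hi
        have := congrArg (fun f : LaurentPolynomial A => f.coeff i) hx
        rw [← hcast] at this
        rw [AddMonoidAlgebra.coeff_add, Finsupp.add_apply, coefA, coefBpos, add_zero] at this
        rw [← LaurentPolynomial.single_eq_C_mul_T, AddMonoidAlgebra.coeff_single, Finsupp.single_apply, if_pos rfl] at this
        rw [← this]
        exact Ideal.mem_span_singleton'.mpr ⟨aF i.toNat, rfl⟩
      · have : i.toNat = 0 := by omega
        rw [this, pow_zero, Ideal.span_singleton_one]
        exact Submodule.mem_top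
    · intro ha
      obtain ⟨c, hc⟩ := Ideal.mem_span_singleton'.mp ha
      by_cases hi : 0 ≤ i
      · refine ⟨Ideal.Quotient.mk (Ideal.span {(X 0 : MvPolynomial (Fin 2) A) * X 1 - C ξ}) (C c * X 0 ^ i.toNat), ?_⟩
        rw [hgu', LaurentPolynomial.single_eq_C_mul_T, hc, Int.toNat_of_nonneg hi]
      · have h0 : i.toNat = 0 := by omega
        rw [h0, pow_zero, mul_one] at hc
        refine ⟨Ideal.Quotient.mk (Ideal.span {(X 0 : MvPolynomial (Fin 2) A) * X 1 - C ξ}) (C a * X 1 ^ ((-i).toNat - 1 + 1)), ?_⟩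
        rw [hgv', LaurentPolynomial.single_eq_C_mul_T,
          show (-(((((-i).toNat - 1 : ℕ)) : ℤ) + 1) : ℤ) = i by omega]
end
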